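/- For all real x, y and all real s, t with |s| + |t| < 1, the double series ∑_{n,m=0}^{∞} L_{n,m}(x,y) · s^n · t^m converges (absolutely) to e^{(-sx - ty)/(1 - s - t)} / (1 - s - t). -/

import Mathlib

noncomputable def L2 (n m : ℕ) (x y : ℝ) : ℝ :=
  ∑ i ∈ Finset.range (m+1), ∑ s ∈ Finset.range (n+1),
    ((-1:ℝ)^(i+s) / ((Nat.factorial i) * (Nat.factorial s))) *
      ((m+n).choose (m-i)) * ((n+i).choose (n-s)) * x^s * y^i

open Finset

noncomputable def Gf (x y s t : ℝ) (q : (ℕ × ℕ) × (ℕ × ℕ)) : ℝ :=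
  (x ^ q.1.1 * y ^ q.1.2 / ((Nat.factorial q.1.1 : ℝ) * (Nat.factorial q.1.2))) *
    ((q.1.2 + q.1.1 + q.2.1).choose q.2.1) * ((q.2.1).choose q.2.2) *
    s ^ (q.1.1 + q.2.2) * t ^ (q.1.2 + (q.2.1 - q.2.2))

lemma abs_Gf (x y s t : ℝ) (q : (ℕ × ℕ) × (ℕ × ℕ)) :
    |Gf x y s t q| = Gf |x| |y| |s| |t| q := by
  simp [Gf, abs_mul, abs_div, abs_pow, Nat.abs_cast]

lemma hasSum_congr' {α : Type*} {f g : α → ℝ} {a : ℝ} (h : ∀ x, f x = g x)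
    (hf : HasSum f a) : HasSum g a := (funext h : f = g) ▸ hf

lemma hasSum_prod_build {β γ : Type*} {F : β × γ → ℝ} {g : β → ℝ} {a : ℝ}
    (hF : Summable F) (hfib : ∀ b, HasSum (fun c => F (b, c)) (g b)) (hg : HasSum g a) :
    HasSum F a := by
  have h2 : HasSum g (∑' q, F q) := hF.hasSum.prod_fiberwise hfib
  rw [hg.unique h2]
  exact hF.hasSum

lemma rowHasSum (s t : ℝ) (p : ℕ) :
    HasSum (fun a : ℕ => (p.choose a : ℝ) * s ^ a * t ^ (p - a)) ((s + t) ^ p) := by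
  have h0 : ∀ a ∉ Finset.range (p + 1), (p.choose a : ℝ) * s ^ a * t ^ (p - a) = 0 := by
    intro a ha
    simp only [Finset.mem_range, not_lt] at ha
    simp [Nat.choose_eq_zero_of_lt ha]
  have h1 : HasSum (fun a : ℕ => (p.choose a : ℝ) * s ^ a * t ^ (p - a)) _ :=
    hasSum_sum_of_ne_finset_zero h0
  convert h1 using 1
  rw [add_pow]
  exact Finset.sum_congr rfl (fun k _ => by ring)

lemma colHasSum {r : ℝ} (hr : |r| < 1) (k : ℕ) :
    HasSum (fun p : ℕ => ((k + p).choose p : ℝ) * r ^ p) (1 / (1 - r) ^ (k + 1)) := by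
  have h := hasSum_choose_mul_geometric_of_norm_lt_one (𝕜 := ℝ) k (by rwa [Real.norm_eq_abs])
  apply hasSum_congr' _ h
  intro p
  rw [add_comm k p, Nat.choose_symm_add]

lemma expHasSum (z : ℝ) : HasSum (fun n : ℕ => z ^ n / (Nat.factorial n : ℝ)) (Real.exp z) := by
  rw [Real.exp_eq_exp_ℝ]
  exact NormedSpace.expSeries_div_hasSum_exp z

set_option maxHeartbeats 1000000 in
lemma prodExpHasSum (C A B : ℝ) :
    HasSum (fun ji : ℕ × ℕ => C * (A ^ ji.1 / (Nat.factorial ji.1 : ℝ)) *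
      (B ^ ji.2 / (Nat.factorial ji.2 : ℝ))) (C * Real.exp A * Real.exp B) := by
  have hf : Summable (fun j : ℕ => ‖C * (A ^ j / (Nat.factorial j : ℝ))‖) := by
    have := ((expHasSum |A|).summable.mul_left |C|)
    apply Summable.congr this
    intro j
    simp [Real.norm_eq_abs, abs_mul, abs_div, abs_pow, Nat.abs_cast]
  have hg : Summable (fun i : ℕ => ‖B ^ i / (Nat.factorial i : ℝ)‖) := by
    have := (expHasSum |B|).summable
    apply Summable.congr this
    intro i
    simp [Real.norm_eq_abs, abs_div, abs_pow, Nat.abs_cast]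
  refine hasSum_prod_build (g := fun j : ℕ => C * (A ^ j / (Nat.factorial j : ℝ)) * Real.exp B)
    (summable_mul_of_summable_norm hf hg) (fun j => (expHasSum B).mul_left _)
    (((expHasSum A).mul_left C).mul_right _)

section Slice

variable {x y s t : ℝ}

/-- inner sum over `a` for fixed `(j,i,p)` -/
lemma innerHasSum (x y s t : ℝ) (j i p : ℕ) :
    HasSum (fun a : ℕ => Gf x y s t ((j, i), (p, a)))
      ((x ^ j * y ^ i / ((Nat.factorial j : ℝ) * (Nat.factorial i))) *
        ((i + j + p).choose p) * s ^ j * t ^ i * (s + t) ^ p) := by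
  have h := (rowHasSum s t p).mul_left
    ((x ^ j * y ^ i / ((Nat.factorial j : ℝ) * (Nat.factorial i))) *
      ((i + j + p).choose p) * s ^ j * t ^ i)
  refine hasSum_congr' (fun a => ?_) h
  simp only [Gf]
  rw [pow_add, pow_add]
  ring

end Slice

lemma Gf_nonneg {x y s t : ℝ} (hx : 0 ≤ x) (hy : 0 ≤ y) (hs : 0 ≤ s) (ht : 0 ≤ t)
    (q : (ℕ × ℕ) × (ℕ × ℕ)) : 0 ≤ Gf x y s t q := by
  unfold Gf
  have h1 : (0:ℝ) ≤ x ^ q.1.1 * y ^ q.1.2 / ((Nat.factorial q.1.1 : ℝ) * (Nat.factorial q.1.2)) :=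
    div_nonneg (mul_nonneg (pow_nonneg hx _) (pow_nonneg hy _))
      (mul_nonneg (Nat.cast_nonneg _) (Nat.cast_nonneg _))
  exact mul_nonneg (mul_nonneg (mul_nonneg (mul_nonneg h1 (Nat.cast_nonneg _))
    (Nat.cast_nonneg _)) (pow_nonneg hs _)) (pow_nonneg ht _)

lemma sliceHasSum (x y s t : ℝ) (h : |s + t| < 1) (ji : ℕ × ℕ)
    (hsum : Summable (fun pa : ℕ × ℕ => Gf x y s t (ji, pa))) :
    HasSum (fun pa : ℕ × ℕ => Gf x y s t (ji, pa))
      ((x ^ ji.1 * y ^ ji.2 / ((Nat.factorial ji.1 : ℝ) * (Nat.factorial ji.2))) * s ^ ji.1 *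
        t ^ ji.2 * (1 / (1 - (s + t)) ^ (ji.2 + ji.1 + 1))) := by
  obtain ⟨j, i⟩ := ji
  refine hasSum_prod_build
    (g := fun p : ℕ => (x ^ j * y ^ i / ((Nat.factorial j : ℝ) * (Nat.factorial i))) * s ^ j *
      t ^ i * (((i + j + p).choose p : ℝ) * (s + t) ^ p)) hsum (fun p => ?_) ?_
  · have h1 := innerHasSum x y s t j i p
    convert h1 using 1
    ring
  · have h2 := (colHasSum h (i + j)).mul_left
      ((x ^ j * y ^ i / ((Nat.factorial j : ℝ) * (Nat.factorial i))) * s ^ j * t ^ i)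
    exact hasSum_congr' (fun p => by ring) h2

lemma sliceSummable_nonneg {x y s t : ℝ} (hx : 0 ≤ x) (hy : 0 ≤ y) (hs : 0 ≤ s) (ht : 0 ≤ t)
    (h : s + t < 1) (ji : ℕ × ℕ) :
    Summable (fun pa : ℕ × ℕ => Gf x y s t (ji, pa)) := by
  have h' : |s + t| < 1 := by rw [abs_of_nonneg (by linarith)]; exact h
  refine (summable_prod_of_nonneg (fun pa => Gf_nonneg hx hy hs ht (ji, pa))).2 ⟨fun p => ?_, ?_⟩
  · exact (innerHasSum x y s t ji.1 ji.2 p).summable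
  · refine Summable.congr (f := fun p : ℕ =>
      (x ^ ji.1 * y ^ ji.2 / ((Nat.factorial ji.1 : ℝ) * (Nat.factorial ji.2))) *
        ((ji.2 + ji.1 + p).choose p : ℝ) * s ^ ji.1 * t ^ ji.2 * (s + t) ^ p) ?_ ?_
    · refine Summable.congr (((colHasSum h' (ji.2 + ji.1)).summable.mul_left
        ((x ^ ji.1 * y ^ ji.2 / ((Nat.factorial ji.1 : ℝ) * (Nat.factorial ji.2))) * s ^ ji.1 *
          t ^ ji.2)) ) (fun p => by ring)
    · intro p
      exact ((innerHasSum x y s t ji.1 ji.2 p).tsum_eq).symm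

lemma g2_eq (x y s t : ℝ) (h : |s + t| < 1) (j i : ℕ) :
    (x ^ j * y ^ i / ((Nat.factorial j : ℝ) * (Nat.factorial i))) * s ^ j * t ^ i *
        (1 / (1 - (s + t)) ^ (i + j + 1)) =
      (1 / (1 - (s + t))) * ((s * x / (1 - (s + t))) ^ j / (Nat.factorial j : ℝ)) *
        ((t * y / (1 - (s + t))) ^ i / (Nat.factorial i : ℝ)) := by
  have hne : (1 - (s + t)) ≠ 0 := by have := abs_lt.1 h; linarith
  have hj : (Nat.factorial j : ℝ) ≠ 0 := by exact_mod_cast j.factorial_ne_zero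
  have hi : (Nat.factorial i : ℝ) ≠ 0 := by exact_mod_cast i.factorial_ne_zero
  rw [div_pow, div_pow]
  field_simp
  ring

lemma GSummable_nonneg {x y s t : ℝ} (hx : 0 ≤ x) (hy : 0 ≤ y) (hs : 0 ≤ s) (ht : 0 ≤ t)
    (h : s + t < 1) : Summable (Gf x y s t) := by
  have h' : |s + t| < 1 := by rw [abs_of_nonneg (by linarith)]; exact h
  refine (summable_prod_of_nonneg (fun q => Gf_nonneg hx hy hs ht q)).2
    ⟨fun ji => sliceSummable_nonneg hx hy hs ht h ji, ?_⟩
  refine Summable.congr (f := fun ji : ℕ × ℕ =>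
    (1 / (1 - (s + t))) * ((s * x / (1 - (s + t))) ^ ji.1 / (Nat.factorial ji.1 : ℝ)) *
      ((t * y / (1 - (s + t))) ^ ji.2 / (Nat.factorial ji.2 : ℝ)))
    (prodExpHasSum _ _ _).summable (fun ji => ?_)
  beta_reduce
  rw [← g2_eq x y s t h' ji.1 ji.2]
  exact ((sliceHasSum x y s t h' ji (sliceSummable_nonneg hx hy hs ht h ji)).tsum_eq).symm

lemma GHasSum (x y s t : ℝ) (h : |s| + |t| < 1) :
    HasSum (Gf x y s t)
      ((1 / (1 - (s + t))) * Real.exp (s * x / (1 - (s + t))) *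
        Real.exp (t * y / (1 - (s + t)))) := by
  have h' : |s + t| < 1 := lt_of_le_of_lt (abs_add_le s t) h
  have hS : Summable (Gf x y s t) := by
    have h2 := GSummable_nonneg (abs_nonneg x) (abs_nonneg y) (abs_nonneg s) (abs_nonneg t) h
    exact (h2.congr (fun q => (abs_Gf x y s t q).symm)).of_abs
  refine hasSum_prod_build (g := fun ji : ℕ × ℕ =>
    (1 / (1 - (s + t))) * ((s * x / (1 - (s + t))) ^ ji.1 / (Nat.factorial ji.1 : ℝ)) *
      ((t * y / (1 - (s + t))) ^ ji.2 / (Nat.factorial ji.2 : ℝ))) hS (fun ji => ?_) ?_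
  · beta_reduce
    rw [← g2_eq x y s t h' ji.1 ji.2]
    exact sliceHasSum x y s t h' ji (hS.prod_factor ji)
  · exact prodExpHasSum _ _ _

lemma choose_key (n m i j : ℕ) (hj : j ≤ n) (hi : i ≤ m) :
    (((n + m).choose ((n - j) + (m - i)) : ℝ)) * ((((n - j) + (m - i)).choose (n - j) : ℝ)) =
      ((m + n).choose (m - i) : ℝ) * (((n + i).choose (n - j) : ℝ)) := by
  obtain ⟨A, rfl⟩ : ∃ A, n = j + A := ⟨n - j, by omega⟩
  obtain ⟨B, rfl⟩ : ∃ B, m = i + B := ⟨m - i, by omega⟩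
  simp only [Nat.add_sub_cancel_left]
  have f1 : ((Nat.factorial A : ℝ)) ≠ 0 := by exact_mod_cast A.factorial_ne_zero
  have f2 : ((Nat.factorial B : ℝ)) ≠ 0 := by exact_mod_cast B.factorial_ne_zero
  have f3 : ((Nat.factorial (i + j) : ℝ)) ≠ 0 := by exact_mod_cast (i + j).factorial_ne_zero
  have f4 : ((Nat.factorial (A + B) : ℝ)) ≠ 0 := by exact_mod_cast (A + B).factorial_ne_zero
  have f5 : ((Nat.factorial (A + (i + j)) : ℝ)) ≠ 0 := by
    exact_mod_cast (A + (i + j)).factorial_ne_zero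
  have e1 : (((j + A + (i + B)).choose (A + B) : ℝ)) =
      (Nat.factorial (A + B + (i + j)) : ℝ) /
        ((Nat.factorial (A + B) : ℝ) * (Nat.factorial (i + j) : ℝ)) := by
    rw [Nat.cast_choose ℝ (by omega), show j + A + (i + B) - (A + B) = i + j from by omega,
      show j + A + (i + B) = A + B + (i + j) from by omega]
  have e2 : (((A + B).choose A : ℝ)) =
      (Nat.factorial (A + B) : ℝ) / ((Nat.factorial A : ℝ) * (Nat.factorial B : ℝ)) := by
    rw [Nat.cast_choose ℝ (by omega), show A + B - A = B from by omega]
  have e3 : (((i + B + (j + A)).choose B : ℝ)) =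
      (Nat.factorial (A + B + (i + j)) : ℝ) /
        ((Nat.factorial B : ℝ) * (Nat.factorial (A + (i + j)) : ℝ)) := by
    rw [Nat.cast_choose ℝ (by omega), show i + B + (j + A) - B = A + (i + j) from by omega,
      show i + B + (j + A) = A + B + (i + j) from by omega]
  have e4 : (((j + A + i).choose A : ℝ)) =
      (Nat.factorial (A + (i + j)) : ℝ) /
        ((Nat.factorial A : ℝ) * (Nat.factorial (i + j) : ℝ)) := by
    rw [Nat.cast_choose ℝ (by omega), show j + A + i - A = i + j from by omega,
      show j + A + i = A + (i + j) from by omega]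
  rw [e1, e2, e3, e4]
  field_simp

def emb (q : Σ nm : ℕ × ℕ, Fin (nm.1 + 1) × Fin (nm.2 + 1)) : (ℕ × ℕ) × (ℕ × ℕ) :=
  ((q.2.1.val, q.2.2.val), ((q.1.1 - q.2.1.val) + (q.1.2 - q.2.2.val), q.1.1 - q.2.1.val))

lemma emb_inj : Function.Injective emb := by
  rintro ⟨⟨n, m⟩, ⟨j, i⟩⟩ ⟨⟨n', m'⟩, ⟨j', i'⟩⟩ hq
  simp only [emb, Prod.mk.injEq] at hq
  obtain ⟨⟨h1, h2⟩, h3, h4⟩ := hq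
  have hj := j.isLt; have hi := i.isLt; have hj' := j'.isLt; have hi' := i'.isLt
  have hn : n = n' := by omega
  have hm : m = m' := by omega
  subst hn; subst hm
  simp only [Sigma.mk.inj_iff, heq_eq_eq, Prod.mk.injEq, true_and]
  exact ⟨Fin.ext h1, Fin.ext h2⟩

lemma emb_range (x y s t : ℝ) (q : (ℕ × ℕ) × (ℕ × ℕ)) (hq : q ∉ Set.range emb) :
    Gf x y s t q = 0 := by
  obtain ⟨⟨j, i⟩, p, a⟩ := q
  rcases le_or_gt a p with hap | hap
  · exfalso
    apply hq
    refine ⟨⟨(j + a, i + (p - a)), ⟨⟨j, by omega⟩, ⟨i, by omega⟩⟩⟩, ?_⟩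
    simp only [emb]
    have e1 : j + a - j = a := by omega
    have e2 : i + (p - a) - i = p - a := by omega
    rw [e1, e2, show a + (p - a) = p from by omega]
  · simp [Gf, Nat.choose_eq_zero_of_lt hap]

lemma fiber_eq (x y s t : ℝ) (nm : ℕ × ℕ) :
    ∑ c : Fin (nm.1 + 1) × Fin (nm.2 + 1), Gf (-x) (-y) s t (emb ⟨nm, c⟩) =
      L2 nm.1 nm.2 x y * s ^ nm.1 * t ^ nm.2 := by
  obtain ⟨n, m⟩ := nm
  unfold L2 emb
  rw [Fintype.sum_prod_type]
  rw [Fin.sum_univ_eq_sum_range (fun j => ∑ i : Fin (m + 1),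
    Gf (-x) (-y) s t ((j, ↑i), n - j + (m - ↑i), n - j))]
  simp only [show ∀ j : ℕ, (∑ i : Fin (m + 1),
      Gf (-x) (-y) s t ((j, ↑i), n - j + (m - ↑i), n - j)) =
      ∑ i ∈ Finset.range (m + 1), Gf (-x) (-y) s t ((j, i), n - j + (m - i), n - j) from
    fun j => Fin.sum_univ_eq_sum_range
      (fun i => Gf (-x) (-y) s t ((j, i), n - j + (m - i), n - j)) (m + 1)]
  simp only [Finset.sum_mul]
  rw [Finset.sum_comm]
  refine Finset.sum_congr rfl (fun i hi => ?_)
  refine Finset.sum_congr rfl (fun j hj => ?_)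
  rw [Finset.mem_range] at hj hi
  have hj' : j ≤ n := by omega
  have hi' : i ≤ m := by omega
  simp only [Gf]
  rw [show j + (n - j) = n from by omega,
    show i + (n - j + (m - i) - (n - j)) = m from by omega,
    show i + j + (n - j + (m - i)) = n + m from by omega]
  have hkey := choose_key n m i j hj' hi'
  rw [neg_pow x j, neg_pow y i]
  have hfj : (Nat.factorial j : ℝ) ≠ 0 := by exact_mod_cast j.factorial_ne_zero
  have hfi : (Nat.factorial i : ℝ) ≠ 0 := by exact_mod_cast i.factorial_ne_zero
  field_simp
  linear_combination (s ^ n * t ^ m * ((-1) : ℝ) ^ j * ((-1) : ℝ) ^ i * x ^ j * y ^ i) * hkey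

theorem stmt10 (x y s t : ℝ) (h : |s| + |t| < 1) :
    Summable (fun p : ℕ × ℕ => |L2 p.1 p.2 x y * s^p.1 * t^p.2|) ∧
    HasSum (fun p : ℕ × ℕ => L2 p.1 p.2 x y * s^p.1 * t^p.2)
      (Real.exp ((-s*x - t*y)/(1 - s - t)) / (1 - s - t)) := by
  have hne : (1 : ℝ) - s - t ≠ 0 := by
    have h1 : s ≤ |s| := le_abs_self s
    have h2 : t ≤ |t| := le_abs_self t
    nlinarith [abs_nonneg s, abs_nonneg t]
  -- the signed sum
  have hG := GHasSum (-x) (-y) s t h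
  have h1 : HasSum (Gf (-x) (-y) s t ∘ emb)
      ((1 / (1 - (s + t))) * Real.exp (s * (-x) / (1 - (s + t))) *
        Real.exp (t * (-y) / (1 - (s + t)))) :=
    (emb_inj.hasSum_iff (fun q hq => emb_range (-x) (-y) s t q hq)).2 hG
  have h2 := h1.sigma (fun nm => hasSum_fintype
    (fun c : Fin (nm.1 + 1) × Fin (nm.2 + 1) => Gf (-x) (-y) s t (emb ⟨nm, c⟩)))
  have h3 : HasSum (fun nm : ℕ × ℕ => L2 nm.1 nm.2 x y * s ^ nm.1 * t ^ nm.2)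
      ((1 / (1 - (s + t))) * Real.exp (s * (-x) / (1 - (s + t))) *
        Real.exp (t * (-y) / (1 - (s + t)))) :=
    hasSum_congr' (fun nm => fiber_eq x y s t nm) h2
  have hval : (1 / (1 - (s + t))) * Real.exp (s * (-x) / (1 - (s + t))) *
      Real.exp (t * (-y) / (1 - (s + t))) =
      Real.exp ((-s * x - t * y) / (1 - s - t)) / (1 - s - t) := by
    rw [mul_assoc, ← Real.exp_add,
      show s * (-x) / (1 - (s + t)) + t * (-y) / (1 - (s + t)) =
        (-s * x - t * y) / (1 - s - t) from by rw [← add_div, show (1 : ℝ) - (s + t) = 1 - s - t from by ring]; ring_nf,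
      show (1 : ℝ) - (s + t) = 1 - s - t from by ring]
    ring
  rw [hval] at h3
  -- the absolute bound
  have hGa := GHasSum |x| |y| |s| |t| (by simpa [abs_abs] using h)
  have h1a : HasSum (Gf |x| |y| |s| |t| ∘ emb)
      ((1 / (1 - (|s| + |t|))) * Real.exp (|s| * |x| / (1 - (|s| + |t|))) *
        Real.exp (|t| * |y| / (1 - (|s| + |t|)))) :=
    (emb_inj.hasSum_iff (fun q hq => emb_range |x| |y| |s| |t| q hq)).2 hGa
  have h2a := h1a.sigma (fun nm => hasSum_fintype
    (fun c : Fin (nm.1 + 1) × Fin (nm.2 + 1) => Gf |x| |y| |s| |t| (emb ⟨nm, c⟩)))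
  refine ⟨Summable.of_nonneg_of_le (fun nm => abs_nonneg _) (fun nm => ?_) h2a.summable, h3⟩
  rw [← fiber_eq x y s t nm]
  refine (Finset.abs_sum_le_sum_abs _ _).trans ?_
  refine Finset.sum_le_sum (fun c _ => le_of_eq ?_)
  rw [abs_Gf, abs_neg, abs_neg]
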